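/- Let E be a finite-dimensional real inner product space, let M : E →ₗ[ℝ] E be self-adjoint and positive semidefinite (⟪M x, x⟫ ≥ 0 for all x), and let V be a subspace of E with (ker M) ⊓ V = ⊥. Let P_V and P_{V⊥} denote the orthogonal projections onto V and its orthogonal complement. Then the linear map M ∘ P_V + P_{V⊥} is bijective. -/

import Mathlib

open RealInnerProductSpace

/-- The orthogonal projection onto a subspace, as a linear endomorphism. -/
noncomputable def orthProj {E : Type*} [NormedAddCommGroup E] [InnerProductSpace ℝ E]
    [FiniteDimensional ℝ E] (V : Submodule ℝ E) : E →ₗ[ℝ] E :=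
  (V.subtypeL.comp (V.orthogonalProjectionOnto)).toLinearMap

lemma psd_inner_self_zero {E : Type*} [NormedAddCommGroup E] [InnerProductSpace ℝ E]
    (M : E →ₗ[ℝ] E)
    (hMsym : ∀ x y : E, ⟪M x, y⟫ = ⟪x, M y⟫)
    (hMpsd : ∀ x : E, 0 ≤ ⟪M x, x⟫)
    {v : E} (hv : ⟪M v, v⟫ = 0) : M v = 0 := by
  have key : ∀ u : E, ⟪M v, u⟫ = 0 := by
    intro u
    set a : ℝ := ⟪M u, u⟫ with ha
    set b : ℝ := ⟪M v, u⟫ with hb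
    have ha0 : 0 ≤ a := hMpsd u
    have hexp : ∀ t : ℝ, 0 ≤ a * t ^ 2 + 2 * b * t := by
      intro t
      have h := hMpsd (v + t • u)
      have hsym : ⟪M u, v⟫ = ⟪M v, u⟫ := by
        rw [hMsym u v, real_inner_comm]
      have heq : ⟪M (v + t • u), v + t • u⟫ = a * t ^ 2 + 2 * b * t := by
        simp only [map_add, map_smul, inner_add_left, inner_add_right,
          real_inner_smul_left, real_inner_smul_right, hv, hsym, ha, hb]
        ring
      linarith [heq ▸ h]
    have h1 := hexp (-(b) / (a + 1))
    have hpos : (0:ℝ) < a + 1 := by linarith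
    have hne : (a + 1) ≠ 0 := ne_of_gt hpos
    have hrw : a * (-(b) / (a + 1)) ^ 2 + 2 * b * (-(b) / (a + 1))
        = -(b ^ 2 * (a + 2)) / (a + 1) ^ 2 := by
      field_simp
      ring
    rw [hrw] at h1
    have h2 : b ^ 2 * (a + 2) / (a + 1) ^ 2 ≤ 0 := by rw [neg_div] at h1; linarith
    have h3 : 0 ≤ b ^ 2 * (a + 2) / (a + 1) ^ 2 := by positivity
    have h4 : b ^ 2 * (a + 2) / (a + 1) ^ 2 = 0 := le_antisymm h2 h3
    have h5 : b ^ 2 * (a + 2) = 0 := by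
      field_simp at h4
      linarith [h4]
    nlinarith [sq_nonneg b]
  have := key (M v)
  exact inner_self_eq_zero.mp this

theorem bott_duffin_invertibility
    {E : Type*} [NormedAddCommGroup E] [InnerProductSpace ℝ E] [FiniteDimensional ℝ E]
    (M : E →ₗ[ℝ] E)
    (hMsym : ∀ x y : E, ⟪M x, y⟫ = ⟪x, M y⟫)
    (hMpsd : ∀ x : E, 0 ≤ ⟪M x, x⟫)
    (V : Submodule ℝ E)
    (hker : LinearMap.ker M ⊓ V = ⊥) :
    Function.Bijective (M ∘ₗ orthProj V + orthProj Vᗮ) := by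
  suffices hinj : Function.Injective (M ∘ₗ orthProj V + orthProj Vᗮ) by
    exact ⟨hinj, LinearMap.surjective_of_injective hinj⟩
  rw [← LinearMap.ker_eq_bot, LinearMap.ker_eq_bot']
  intro x hx
  set v : E := orthProj V x with hvdef
  set w : E := orthProj Vᗮ x with hwdef
  have hvV : v ∈ V := Submodule.coe_mem (V.orthogonalProjectionOnto x)
  have hwVp : w ∈ Vᗮ := Submodule.coe_mem (Vᗮ.orthogonalProjectionOnto x)
  have hxvw : v + w = x := by
    simp only [hvdef, hwdef, orthProj, ContinuousLinearMap.coe_coe, ContinuousLinearMap.comp_apply, Submodule.subtypeL_apply]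
    exact
      (V.starProjection_add_starProjection_orthogonal x)
  have hMv : M v + w = 0 := hx
  have hMvVp : M v ∈ Vᗮ := by
    rw [eq_neg_of_add_eq_zero_left hMv]
    exact neg_mem hwVp
  have hinner : ⟪M v, v⟫ = 0 := by rw [real_inner_comm]; exact hMvVp v hvV
  have hMv0 : M v = 0 := psd_inner_self_zero M hMsym hMpsd hinner
  have hv0 : v = 0 := by
    have : v ∈ LinearMap.ker M ⊓ V := ⟨hMv0, hvV⟩
    rw [hker] at this
    exact this
  have hw0 : w = 0 := by
    rw [hv0, map_zero, zero_add] at hMv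
    exact hMv
  rw [← hxvw, hv0, hw0, add_zero]
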